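/- arXiv:2107.01687 — 2 statements merged into one kernel-verified Lean document; each statement's English description precedes it below -/
import Mathlib

section
/- If M is an irreducible nonnegative square matrix and there exists a strictly positive vector v with M v = v, then the spectral radius of M equals 1. -/
open Module.End Matrix

lemma norm_le_one_of_eigen {S : Type} [Fintype S] [DecidableEq S] [Nonempty S]
    (M : Matrix S S ℝ) (hM : ∀ s t, 0 ≤ M s t)
    (v : S → ℝ) (hv : ∀ s, 0 < v s) (hfix : M.mulVec v = v)
    (μ : ℂ) (x : S → ℂ) (hx : x ≠ 0)
    (heig : (M.map Complex.ofReal).mulVec x = μ • x) : ‖μ‖ ≤ 1 := by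
  obtain ⟨s, -, hs⟩ := Finset.exists_max_image Finset.univ (fun t => ‖x t‖ / v t)
    ⟨Classical.arbitrary S, Finset.mem_univ _⟩
  have hxs : 0 < ‖x s‖ := by
    rcases (norm_nonneg (x s)).lt_or_eq with h | h
    · exact h
    · exfalso; apply hx
      funext t
      have ht := hs t (Finset.mem_univ t)
      rw [← h] at ht
      have h0 : ‖x t‖ / v t ≤ 0 := by simpa using ht
      have h1 : ‖x t‖ ≤ 0 := by
        have := mul_le_mul_of_nonneg_right h0 (hv t).le
        rwa [div_mul_cancel₀ _ (hv t).ne', zero_mul] at this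
      simpa using le_antisymm h1 (norm_nonneg _)
  set c := ‖x s‖ / v s with hc
  have hbound : ∀ t, ‖x t‖ ≤ c * v t := by
    intro t
    calc ‖x t‖ = ‖x t‖ / v t * v t := by rw [div_mul_cancel₀ _ (hv t).ne']
    _ ≤ c * v t := mul_le_mul_of_nonneg_right (hs t (Finset.mem_univ t)) (hv t).le
  have key : ‖μ‖ * ‖x s‖ ≤ ‖x s‖ := by
    have h1 : ‖μ‖ * ‖x s‖ = ‖((M.map Complex.ofReal).mulVec x) s‖ := by
      rw [heig]; simp [norm_smul]
    have h2 : ‖((M.map Complex.ofReal).mulVec x) s‖ ≤ ∑ t, M s t * ‖x t‖ := by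
      refine (norm_sum_le _ _).trans (Finset.sum_le_sum fun t _ => ?_)
      simp [Matrix.map_apply, norm_mul, Real.norm_of_nonneg (hM s t)]
    have h3 : ∑ t, M s t * ‖x t‖ ≤ ∑ t, M s t * (c * v t) :=
      Finset.sum_le_sum fun t _ => mul_le_mul_of_nonneg_left (hbound t) (hM s t)
    have h4 : ∑ t, M s t * (c * v t) = c * v s := by
      have : ∑ t, M s t * (c * v t) = c * ∑ t, M s t * v t := by
        rw [Finset.mul_sum]; congr 1; funext t; ring
      rw [this]
      have := congrFun hfix s
      simp only [Matrix.mulVec, dotProduct] at this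
      rw [this]
    have h5 : c * v s = ‖x s‖ := div_mul_cancel₀ _ (hv s).ne'
    rw [h1]
    exact h2.trans (h3.trans (h4 ▸ h5.le))
  exact le_of_mul_le_mul_right (by rw [one_mul]; exact key) hxs

/-- an irreducible nonnegative matrix with a strictly positive fixed vector
has spectral radius 1. -/
theorem irreducible_pos_fixed_vector_spectralRadius_eq_one {S : Type} [Fintype S]
    [DecidableEq S] [Nonempty S] (M : Matrix S S ℝ) (hM : ∀ s t, 0 ≤ M s t)
    (hirr : ∀ s t : S, Relation.ReflTransGen (fun a b => 0 < M a b) s t)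
    (v : S → ℝ) (hv : ∀ s, 0 < v s)
    (hfix : M.mulVec v = v) :
    spectralRadius ℂ (M.map Complex.ofReal) = 1 := by
  set A := M.map Complex.ofReal with hA
  -- spectrum of A equals eigenvalues of toLin'
  have hspec : ∀ μ : ℂ, μ ∈ spectrum ℂ A ↔ HasEigenvalue (Matrix.toLin' A) μ := by
    intro μ
    rw [← AlgEquiv.spectrum_eq (Matrix.toLinAlgEquiv <| Pi.basisFun ℂ S),
      ← hasEigenvalue_iff_mem_spectrum]
    rfl
  have hone : (1 : ℂ) ∈ spectrum ℂ A := by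
    rw [hspec]
    apply hasEigenvalue_of_hasEigenvector (x := fun s => (v s : ℂ))
    constructor
    · rw [mem_eigenspace_iff, one_smul]
      show A.mulVec _ = _
      funext s
      have := congrFun hfix s
      simp only [Matrix.mulVec, dotProduct] at this ⊢
      push_cast [hA, Matrix.map_apply]
      exact_mod_cast congrArg Complex.ofReal this
    · intro h
      have := congrFun h (Classical.arbitrary S)
      simp at this
      exact absurd this (hv _).ne'
  have hle : ∀ μ ∈ spectrum ℂ A, ‖μ‖ ≤ 1 := by
    intro μ hμ
    rw [hspec] at hμ
    obtain ⟨x, hx⟩ := hμ.exists_hasEigenvector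
    refine norm_le_one_of_eigen M hM v hv hfix μ x hx.2 ?_
    have := hx.apply_eq_smul
    simpa [Matrix.toLin'_apply] using this
  -- conclude
  apply le_antisymm
  · rw [spectralRadius]
    refine iSup₂_le fun μ hμ => ?_
    have := hle μ hμ
    simpa [← ENNReal.coe_one, ENNReal.coe_le_coe, ← NNReal.coe_le_coe] using this
  · have := le_iSup₂ (f := fun (μ : ℂ) (_ : μ ∈ spectrum ℂ A) => (‖μ‖₊ : ENNReal)) 1 hone
    simpa [spectralRadius] using this
end

section
/- In the subset construction of a finite automaton without diamonds, every state of the determinization reachable from a singleton, when transitioning on a letter X, satisfies: for every state r in the successor set there is exactly one state q in the current set with a transition q →^X r. Formally: if A = (Q, Γ, δ) has no diamonds and P ⊆ Q is reachable in the subset construction from a singleton {q₀}, then for each letter X and each r ∈ δ(P, X) there is exactly one q ∈ P with (q, X, r) ∈ δ. -/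
/-- A finite path in an automaton with transition relation `δ`, labelled by `u`. -/
def FinPath {Q Γ : Type} (δ : Q → Γ → Q → Prop) {n : ℕ}
    (u : Fin n → Γ) (g : Fin (n + 1) → Q) : Prop :=
  ∀ i : Fin n, δ (g i.castSucc) (u i) (g i.succ)

/-- One step of the subset construction. -/
def stepSet {Q Γ : Type} (δ : Q → Γ → Q → Prop) (P : Set Q) (X : Γ) : Set Q :=
  {r | ∃ q ∈ P, δ q X r}

/-- The subset construction applied along a finite word. -/
def runSet {Q Γ : Type} (δ : Q → Γ → Q → Prop) (P : Set Q) (u : List Γ) : Set Q :=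
  u.foldl (stepSet δ) P

lemma runSet_concat {Q Γ : Type} (δ : Q → Γ → Q → Prop) (P : Set Q) (v : List Γ) (X : Γ) :
    runSet δ P (v ++ [X]) = stepSet δ (runSet δ P v) X := by
  simp [runSet, List.foldl_append]

lemma exists_path {Q Γ : Type} (δ : Q → Γ → Q → Prop) (q₀ : Q) :
    ∀ (u : List Γ) (q : Q), q ∈ runSet δ {q₀} u →
      ∃ g : Fin (u.length + 1) → Q, g 0 = q₀ ∧ g (Fin.last u.length) = q ∧
        FinPath δ u.get g := by
  intro u
  induction u using List.reverseRecOn with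
  | nil =>
      intro q hq
      simp only [runSet, List.foldl_nil, Set.mem_singleton_iff] at hq
      subst hq
      exact ⟨fun _ => q, rfl, rfl, fun i => i.elim0⟩
  | append_singleton v X ih =>
      intro q hq
      rw [runSet_concat] at hq
      obtain ⟨p, hp, hpq⟩ := hq
      obtain ⟨g, hg0, hgl, hgp⟩ := ih p hp
      have e : (v ++ [X]).length = v.length + 1 := by simp
      refine ⟨fun i => if h : i.val ≤ v.length then g ⟨i.val, by omega⟩ else q, ?_, ?_, ?_⟩
      · simpa using hg0
      · have : ¬ (Fin.last (v ++ [X]).length).val ≤ v.length := by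
          simp [Fin.last, e]
        simp [this]
      · intro i
        have hi : i.val < v.length + 1 := by have := i.isLt; omega
        by_cases h : i.val < v.length
        · have h1 : (i.castSucc).val ≤ v.length := by simp; omega
          have h2 : (i.succ).val ≤ v.length := by simp [Fin.val_succ]; omega
          simp only [h1, h2, dif_pos]
          have hlab : (v ++ [X]).get i = v.get ⟨i.val, h⟩ := by
            simp only [List.get_eq_getElem]
            exact List.getElem_append_left h
          rw [hlab]
          exact hgp ⟨i.val, h⟩
        · have hv : i.val = v.length := by omega
          have h1 : (i.castSucc).val ≤ v.length := by simp [hv]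
          have h2 : ¬ (i.succ).val ≤ v.length := by simp [Fin.val_succ, hv]
          simp only [h1, h2, dif_pos, dif_neg, not_false_iff]
          have hlab : (v ++ [X]).get i = X := by
            simp [List.get_eq_getElem, hv]
          rw [hlab]
          have hcast : (⟨(i.castSucc).val, by simp [hv]⟩ : Fin (v.length + 1))
              = Fin.last v.length := by ext; simp [hv]
          rw [hcast, hgl]
          exact hpq

/-- in the subset construction of an automaton without diamonds, for every set `P`
reachable from a singleton `{q₀}`, every letter `X` and every `r ∈ δ(P, X)`, there is exactly
one `q ∈ P` with a transition `q →^X r`. -/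
theorem subset_construction_unique_predecessor {Q Γ : Type}
    (δ : Q → Γ → Q → Prop)
    -- no diamonds: no two distinct equally-labelled paths between the same two states
    (hnodiamond : ¬ ∃ (p r : Q) (n : ℕ) (u : Fin (n + 1) → Γ) (g₁ g₂ : Fin (n + 2) → Q),
        FinPath δ u g₁ ∧ FinPath δ u g₂ ∧
        g₁ 0 = p ∧ g₂ 0 = p ∧
        g₁ (Fin.last (n + 1)) = r ∧ g₂ (Fin.last (n + 1)) = r ∧ g₁ ≠ g₂)
    (q₀ : Q) (u : List Γ) (X : Γ) (r : Q)
    (hr : r ∈ stepSet δ (runSet δ {q₀} u) X) :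
    ∃! q : Q, q ∈ runSet δ {q₀} u ∧ δ q X r := by
  obtain ⟨q, hq, hqr⟩ := hr
  refine ⟨q, ⟨hq, hqr⟩, ?_⟩
  rintro q' ⟨hq', hq'r⟩
  by_contra hne
  obtain ⟨f₁, hf10, hf1l, hf1p⟩ := exists_path δ q₀ u q' hq'
  obtain ⟨f₂, hf20, hf2l, hf2p⟩ := exists_path δ q₀ u q hq
  have extend : ∀ (g : Fin (u.length + 1) → Q) (s : Q),
      FinPath δ u.get g → δ (g (Fin.last u.length)) X s →
      FinPath δ (fun i : Fin (u.length + 1) => if h : i.val < u.length then u.get ⟨i.val, h⟩ else X)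
        (fun j : Fin (u.length + 2) => if h : j.val ≤ u.length then g ⟨j.val, by omega⟩ else s) := by
    intro g s hg hs i
    by_cases h : i.val < u.length
    · have h1 : (i.castSucc).val ≤ u.length := by simp; omega
      have h2 : (i.succ).val ≤ u.length := by simp [Fin.val_succ]; omega
      simp only [h1, h2, dif_pos, h]
      exact hg ⟨i.val, h⟩
    · have hv : i.val = u.length := by have := i.isLt; omega
      have h1 : (i.castSucc).val ≤ u.length := by simp [hv]
      have h2 : ¬ (i.succ).val ≤ u.length := by simp [Fin.val_succ, hv]
      simp only [h1, h2, dif_pos, dif_neg, not_false_iff, h]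
      have hcast : (⟨(i.castSucc).val, by simp [hv]⟩ : Fin (u.length + 1))
          = Fin.last u.length := by ext; simp [hv]
      rw [hcast]
      exact hs
  apply hnodiamond
  refine ⟨q₀, r, u.length,
    (fun i : Fin (u.length + 1) => if h : i.val < u.length then u.get ⟨i.val, h⟩ else X),
    (fun j : Fin (u.length + 2) => if h : j.val ≤ u.length then f₁ ⟨j.val, by omega⟩ else r),
    (fun j : Fin (u.length + 2) => if h : j.val ≤ u.length then f₂ ⟨j.val, by omega⟩ else r),
    extend f₁ r hf1p (by rw [hf1l]; exact hq'r),
    extend f₂ r hf2p (by rw [hf2l]; exact hqr), ?_, ?_, ?_, ?_, ?_⟩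
  · simpa using hf10
  · simpa using hf20
  · simp [Fin.last]
  · simp [Fin.last]
  · intro heq
    have h := congrFun heq ⟨u.length, by omega⟩
    simp only [le_refl, dif_pos] at h
    have h1 : (⟨u.length, by omega⟩ : Fin (u.length + 1)) = Fin.last u.length := rfl
    rw [h1, hf1l, hf2l] at h
    exact hne h
end
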